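/- Let A be a Noetherian commutative ring and I ⊆ A an ideal. Then the I-adic completion Â = lim_n A/Iⁿ is I·Â-adically complete; equivalently, Â, viewed as an A-module, is IsAdicComplete with respect to I. -/

import Mathlib

namespace AdicCompletionCompleteAux

open AdicCompletion LinearMap

variable {A : Type*} [CommRing A] (I : Ideal A)

lemma smul_top_le_ker (M : Type*) [AddCommGroup M] [Module A M] (n : ℕ) :
    (I ^ n • ⊤ : Submodule A (AdicCompletion I M)) ≤ ker (AdicCompletion.eval I M n) := by
  refine Submodule.smul_le.mpr fun r hr x _ ↦ ?_
  simp only [mem_ker, map_smul]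
  obtain ⟨m, hm⟩ := Submodule.Quotient.mk_surjective _ (AdicCompletion.eval I M n x)
  rw [← hm, ← Submodule.Quotient.mk_smul, Submodule.Quotient.mk_eq_zero]
  exact Submodule.smul_mem_smul hr Submodule.mem_top

lemma ker_eval_le [IsNoetherianRing A] (n : ℕ) :
    ker (AdicCompletion.eval I A n) ≤ (I ^ n • ⊤ : Submodule A (AdicCompletion I A)) := by
  intro x hx
  have hx' : x.val n = 0 := hx
  set S : Submodule A A := (I ^ n • ⊤ : Submodule A A) with hS
  have hexact : Function.Exact (AdicCompletion.map I S.subtype) (AdicCompletion.map I S.mkQ) :=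
    AdicCompletion.map_exact (Submodule.injective_subtype S) (LinearMap.exact_subtype_mkQ S)
      (Submodule.mkQ_surjective S)
  have hx0 : AdicCompletion.map I S.mkQ x = 0 := by
    ext m
    obtain ⟨a, ha⟩ := Submodule.Quotient.mk_surjective _ (x.val m)
    rw [map_val_apply, val_zero_apply, ← ha, reduceModIdeal_apply, Submodule.Quotient.mk_eq_zero]
    rcases le_total m n with hmn | hnm
    · have h0 : x.val m = 0 := by
        rw [← transitionMap_comp_eval_apply I A hmn x, hx']
        exact LinearMap.map_zero _
      have ha' : a ∈ (I ^ m • ⊤ : Submodule A A) := by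
        rw [← Submodule.Quotient.mk_eq_zero, ha, h0]
      have hmem : S.mkQ a ∈ Submodule.map S.mkQ (I ^ m • ⊤ : Submodule A A) :=
        Submodule.mem_map_of_mem ha'
      rw [Submodule.map_smul''] at hmem
      exact Submodule.smul_mono le_rfl le_top hmem
    · have h0 : transitionMap I A hnm (x.val m) = 0 := by
        rw [transitionMap_comp_eval_apply I A hnm x, hx']
      rw [← ha] at h0
      change (Submodule.Quotient.mk a : A ⧸ (I ^ n • ⊤ : Submodule A A)) = 0 at h0
      have haS : a ∈ S := by rwa [← Submodule.Quotient.mk_eq_zero]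
      have hz : S.mkQ a = 0 := (Submodule.Quotient.mk_eq_zero S).mpr haS
      rw [hz]
      exact Submodule.zero_mem _
  obtain ⟨y, hy⟩ := (hexact x).mp hx0
  obtain ⟨t, ht⟩ := AdicCompletion.ofTensorProduct_surjective_of_finite I S y
  rw [← hy, ← ht]
  clear ht hy hx0 hexact hx hx'
  induction t with
  | zero => simp
  | tmul c s =>
      rw [ofTensorProduct_tmul]
      have key : AdicCompletion.map I S.subtype (c • AdicCompletion.of I S s) =
          (s : A) • c := by
        ext m
        obtain ⟨b, hb⟩ := Submodule.Quotient.mk_surjective _ (c.val m)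
        rw [map_val_apply, AdicCompletion.smul_eval, AdicCompletion.of_apply,
          Submodule.mkQ_apply, ← hb]
        have hsm : (Submodule.Quotient.mk b : A ⧸ (I ^ m • ⊤ : Ideal A)) •
            (Submodule.Quotient.mk s : ↥S ⧸ (I ^ m • ⊤ : Submodule A ↥S)) =
            Submodule.Quotient.mk (b • s) :=
          (Submodule.Quotient.mk_smul _ b s).symm
        rw [hsm, reduceModIdeal_apply, AdicCompletion.val_smul_apply, ← hb,
          ← Submodule.Quotient.mk_smul]
        congr 1
        simp only [Submodule.coe_subtype, smul_eq_mul]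
        exact mul_comm b (s : A)
      rw [key]
      refine Submodule.smul_induction_on s.2 (fun r hr m _ ↦ ?_) (fun a b ha hb ↦ ?_)
      · rw [smul_eq_mul, mul_smul]
        exact Submodule.smul_mem_smul hr Submodule.mem_top
      · rw [add_smul]
        exact Submodule.add_mem _ ha hb
  | add u v hu hv =>
      rw [map_add, map_add]
      exact Submodule.add_mem _ hu hv

end AdicCompletionCompleteAux

/-- For a Noetherian commutative ring `A` and an ideal `I`, the `I`-adic completion of `A`
is `I`-adically complete. -/
theorem adicCompletion_isAdicComplete (A : Type*) [CommRing A] [IsNoetherianRing A]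
    (I : Ideal A) :
    IsAdicComplete I (AdicCompletion I A) := by
  haveI : IsPrecomplete I (AdicCompletion I A) := by
    rw [isPrecomplete_iff]
    intro f hf
    have compat : ∀ {m k : ℕ} (h : m ≤ k),
        AdicCompletion.transitionMap I A h ((f k).val k) = (f m).val m := by
      intro m k h
      have hsub : f m - f k ∈ (I ^ m • ⊤ : Submodule A (AdicCompletion I A)) :=
        (SModEq.sub_mem).mp (hf h)
      have h1 := AdicCompletionCompleteAux.smul_top_le_ker I A m hsub
      rw [LinearMap.mem_ker, map_sub, sub_eq_zero] at h1
      rw [AdicCompletion.transitionMap_comp_eval_apply I A h (f k)]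
      exact h1.symm
    refine ⟨⟨fun k ↦ (f k).val k, fun {m k} h ↦ compat h⟩, fun k ↦ ?_⟩
    apply SModEq.sub_mem.mpr
    apply AdicCompletionCompleteAux.ker_eval_le I k
    rw [LinearMap.mem_ker]
    exact (map_sub _ _ _).trans (sub_eq_zero.mpr rfl)
  constructor
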